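/- Fix η ∈ ℝ, an integer s ≥ 1, p×p real matrices A_j and vectors b_j ∈ ℝ^p indexed by a dataset 𝔻, batches 𝔹_1, …, 𝔹_s ⊆ 𝔻 each of cardinality B, and subsets 𝔹̄_l ⊆ 𝔹_l of cardinality ΔB_l < B. Suppose each per-sample gradient is affine: ∇F^{(l−1,j)}(w) = A_j w + b_j. Define w_0* = w_0, and for 1 ≤ l ≤ s: w_l = w_{l−1} − (η/B)·Σ_{j∈𝔹_l} (A_j w_{l−1} + b_j) and w_l* = w_{l−1}* − (η/(B−ΔB_l))·Σ_{j∈𝔹_l∖𝔹̄_l} (A_j w_{l−1}* + b_j). Then Δw_l := w_l* − w_l satisfies, for every 1 ≤ l ≤ s, the exact recursion Δw_l = G(l) + H(l)·Δw_{l−1}, where G(l) = (η/B)·( (B/(B−ΔB_l))·Σ_{j∈𝔹̄_l} (A_j w_{l−1} + b_j) ) − (η/B)·( (ΔB_l/(B−ΔB_l))·Σ_{j∈𝔹_l} (A_j w_{l−1} + b_j) ) and H(l) = I − (η/(B−ΔB_l))·Σ_{j∈𝔹_l∖𝔹̄_l} A_j. -/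

import Mathlib

open Matrix

lemma sum_mulVec_aux {p : ℕ} {ι : Type*} (S : Finset ι)
    (A : ι → Matrix (Fin p) (Fin p) ℝ) (x : Fin p → ℝ) :
    (∑ j ∈ S, A j) *ᵥ x = ∑ j ∈ S, A j *ᵥ x := by
  classical
  induction S using Finset.induction with
  | empty => simp [Matrix.mulVec, dotProduct]
  | insert a t h ih => simp [Finset.sum_insert h, Matrix.add_mulVec, ih]

/-- For affine per-sample gradients `∇F^{(l-1,j)}(w) = A_j w + b_j`, the difference
`Δw_l = w_l* - w_l` between the retrained and original SGD iterates satisfies the exact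
recursion `Δw_l = G(l) + H(l)·Δw_{l-1}` of Equations (6)–(8). -/
theorem affine_gradient_exact_recursion {p : ℕ} {ι : Type*} [DecidableEq ι]
    (η : ℝ) (s : ℕ) (hs : 1 ≤ s)
    (A : ι → Matrix (Fin p) (Fin p) ℝ) (b : ι → Fin p → ℝ)
    (𝔹 𝔹bar : ℕ → Finset ι) (B : ℕ)
    (hcard : ∀ l, 1 ≤ l → l ≤ s → (𝔹 l).card = B)
    (hsub : ∀ l, 1 ≤ l → l ≤ s → 𝔹bar l ⊆ 𝔹 l)
    (hlt : ∀ l, 1 ≤ l → l ≤ s → (𝔹bar l).card < B)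
    (w wstar : ℕ → Fin p → ℝ)
    (h0 : wstar 0 = w 0)
    (hw : ∀ l, 1 ≤ l → l ≤ s →
      w l = w (l - 1) - (η / (B : ℝ)) • ∑ j ∈ 𝔹 l, (A j *ᵥ w (l - 1) + b j))
    (hwstar : ∀ l, 1 ≤ l → l ≤ s →
      wstar l = wstar (l - 1) - (η / ((B : ℝ) - ((𝔹bar l).card : ℝ))) •
        ∑ j ∈ 𝔹 l \ 𝔹bar l, (A j *ᵥ wstar (l - 1) + b j)) :
    ∀ l, 1 ≤ l → l ≤ s →
      wstar l - w l =
        ((η / (B : ℝ)) • (((B : ℝ) / ((B : ℝ) - ((𝔹bar l).card : ℝ))) •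
            ∑ j ∈ 𝔹bar l, (A j *ᵥ w (l - 1) + b j))
          - (η / (B : ℝ)) • ((((𝔹bar l).card : ℝ) / ((B : ℝ) - ((𝔹bar l).card : ℝ))) •
            ∑ j ∈ 𝔹 l, (A j *ᵥ w (l - 1) + b j)))
        + ((1 : Matrix (Fin p) (Fin p) ℝ)
            - (η / ((B : ℝ) - ((𝔹bar l).card : ℝ))) • ∑ j ∈ 𝔹 l \ 𝔹bar l, A j) *ᵥ
          (wstar (l - 1) - w (l - 1)) := by
  intro l h1 hl
  have hmB : ((𝔹bar l).card : ℝ) < (B : ℝ) := by exact_mod_cast hlt l h1 hl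
  have hB0 : (B : ℝ) ≠ 0 := by
    have : (0 : ℝ) ≤ ((𝔹bar l).card : ℝ) := Nat.cast_nonneg _
    linarith
  have hBm0 : (B : ℝ) - ((𝔹bar l).card : ℝ) ≠ 0 := by linarith
  -- abbreviations
  set Δ : Fin p → ℝ := wstar (l - 1) - w (l - 1) with hΔ
  have hws : wstar (l - 1) = w (l - 1) + Δ := by
    simp [hΔ]
  rw [hw l h1 hl, hwstar l h1 hl, hws]
  have hsplit : ∀ (v : ι → Fin p → ℝ),
      ∑ j ∈ 𝔹 l, v j = ∑ j ∈ 𝔹 l \ 𝔹bar l, v j + ∑ j ∈ 𝔹bar l, v j :=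
    fun v => (Finset.sum_sdiff (hsub l h1 hl)).symm
  rw [hsplit (fun j => A j *ᵥ w (l - 1) + b j)]
  have hexp : ∑ j ∈ 𝔹 l \ 𝔹bar l, (A j *ᵥ (w (l - 1) + Δ) + b j)
      = ∑ j ∈ 𝔹 l \ 𝔹bar l, (A j *ᵥ w (l - 1) + b j)
        + ∑ j ∈ 𝔹 l \ 𝔹bar l, (A j *ᵥ Δ) := by
    rw [← Finset.sum_add_distrib]
    refine Finset.sum_congr rfl fun j _ => ?_
    rw [Matrix.mulVec_add]
    abel
  rw [hexp, Matrix.sub_mulVec, Matrix.one_mulVec, Matrix.smul_mulVec,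
    sum_mulVec_aux]
  set X := ∑ j ∈ 𝔹 l \ 𝔹bar l, (A j *ᵥ w (l - 1) + b j)
  set Y := ∑ j ∈ 𝔹bar l, (A j *ᵥ w (l - 1) + b j)
  set Z := ∑ j ∈ 𝔹 l \ 𝔹bar l, (A j *ᵥ Δ)
  match_scalars <;> field_simp <;> ring
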